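/- Let ξ ∼ N(0, Σ) with Σ positive definite, let P = {p : ω_i^⊤ p ≤ b_i, i = 1,…,J} with each ω_i ≠ 0, let 0 < η ≤ 1/2, and let Δ_i = ‖Σ^{1/2}ω_i‖₂ Φ^{-1}(1−η). If x ∉ P_m = {x : ω_i^⊤ x ≤ b_i − Δ_i for all i}, then P(x + ξ ∈ P) < 1 − η. -/

import Mathlib

open MeasureTheory ProbabilityTheory

/-- The standard normal CDF `Φ`. -/
noncomputable def stdNormalCDF : ℝ → ℝ := fun x => cdf (gaussianReal 0 1) x

/-- The standard normal quantile function `Φ⁻¹`. -/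
noncomputable def stdNormalQuantile : ℝ → ℝ := Function.invFun stdNormalCDF

/-- The square root of a positive semidefinite matrix (removed from Mathlib; old definition). -/
noncomputable def Matrix.PosSemidef.sqrt {n : Type*} [Fintype n] [DecidableEq n]
    {A : Matrix n n ℝ} (hA : A.PosSemidef) : Matrix n n ℝ :=
  (hA.1.eigenvectorUnitary : Matrix n n ℝ) * Matrix.diagonal ((↑) ∘ (√·) ∘ hA.1.eigenvalues)
    * (star hA.1.eigenvectorUnitary : Matrix n n ℝ)

lemma Matrix.PosSemidef.sqrt_mul_self {n : Type*} [Fintype n] [DecidableEq n]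
    {A : Matrix n n ℝ} (hA : A.PosSemidef) : hA.sqrt * hA.sqrt = A := by
  unfold Matrix.PosSemidef.sqrt
  set U := hA.1.eigenvectorUnitary
  have hU : (star U : Matrix n n ℝ) * (U : Matrix n n ℝ) = 1 := Unitary.coe_star_mul_self U
  have hD : Matrix.diagonal ((↑) ∘ (√·) ∘ hA.1.eigenvalues)
      * Matrix.diagonal ((↑) ∘ (√·) ∘ hA.1.eigenvalues)
      = Matrix.diagonal (RCLike.ofReal ∘ hA.1.eigenvalues : n → ℝ) := by
    rw [Matrix.diagonal_mul_diagonal]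
    congr 1
    funext i
    simp [Real.mul_self_sqrt (hA.eigenvalues_nonneg i)]
  conv_rhs => rw [hA.1.spectral_theorem, Unitary.conjStarAlgAut_apply]
  rw [show ∀ X Y Z W : Matrix n n ℝ, X * Y * Z * (X * W * Z) = X * (Y * (Z * X) * W) * Z by
    intro X Y Z W; simp only [mul_assoc], hU, mul_one, hD]


lemma stdNormal_Iic (y : ℝ) :
    gaussianReal 0 1 (Set.Iic y) = ENNReal.ofReal (stdNormalCDF y) :=
  (ofReal_cdf _ y).symm

lemma stdNormalCDF_strictMono : StrictMono stdNormalCDF := by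
  intro a c hac
  have h1 : (gaussianReal 0 1) (Set.Ioc a c) ≠ 0 := by
    rw [gaussianReal_of_var_ne_zero 0 one_ne_zero,
      withDensity_apply _ measurableSet_Ioc]
    have : 0 < ∫⁻ x in Set.Ioc a c, gaussianPDF 0 1 x := by
      rw [setLIntegral_pos_iff (measurable_gaussianPDF 0 1)]
      have hsupp : Function.support (gaussianPDF 0 1) = Set.univ := by
        ext y; simp [Function.support, (gaussianPDF_pos 0 one_ne_zero y).ne']
      rw [hsupp, Set.univ_inter, Real.volume_Ioc]
      simpa using hac
    exact this.ne'
  have key : gaussianReal 0 1 (Set.Iic a) < gaussianReal 0 1 (Set.Iic c) := by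
    rw [← Set.Iic_union_Ioc_eq_Iic hac.le,
      measure_union (by intro s hs1 hs2 y hy; exact absurd ((hs2 hy).1) (not_lt.2 (hs1 hy)))
        measurableSet_Ioc]
    exact ENNReal.lt_add_right (measure_ne_top _ _) h1
  have := cdf_eq_real (gaussianReal 0 1) a
  rw [stdNormalCDF, stdNormalCDF, cdf_eq_real, cdf_eq_real]
  exact ENNReal.toReal_lt_toReal (measure_ne_top _ _) (measure_ne_top _ _) |>.mpr key

lemma stdNormalCDF_continuous : Continuous stdNormalCDF := by
  have hmono : Monotone stdNormalCDF := monotone_cdf _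
  rw [continuous_iff_continuousAt]
  intro a
  rw [hmono.continuousAt_iff_leftLim_eq_rightLim]
  have hright : Function.rightLim stdNormalCDF a = stdNormalCDF a := by
    apply hmono.continuousWithinAt_Ioi_iff_rightLim_eq.1
    exact ((cdf (gaussianReal 0 1)).right_continuous a).mono Set.Ioi_subset_Ici_self
  have hleft : Function.leftLim stdNormalCDF a = stdNormalCDF a := by
    have hsing : (cdf (gaussianReal 0 1)).measure {a} = 0 := by
      rw [measure_cdf]
      exact gaussianReal_absolutelyContinuous 0 one_ne_zero (measure_singleton a)
    rw [StieltjesFunction.measure_singleton] at hsing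
    have h1 : Function.leftLim stdNormalCDF a ≤ stdNormalCDF a :=
      hmono.leftLim_le le_rfl
    have h2 : cdf (gaussianReal 0 1) a - Function.leftLim (cdf (gaussianReal 0 1)) a ≤ 0 := by
      by_contra h
      exact (ENNReal.ofReal_pos.2 (lt_of_not_ge h)).ne' hsing
    have : stdNormalCDF a ≤ Function.leftLim stdNormalCDF a := by
      exact sub_nonpos.1 h2
    linarith
  rw [hleft, hright]

lemma stdNormalCDF_quantile (p : ℝ) (hp0 : 0 < p) (hp1 : p < 1) :
    stdNormalCDF (stdNormalQuantile p) = p := by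
  apply Function.invFun_eq
  have htop : Filter.Tendsto stdNormalCDF Filter.atTop (nhds 1) := tendsto_cdf_atTop _
  have hbot : Filter.Tendsto stdNormalCDF Filter.atBot (nhds 0) := tendsto_cdf_atBot _
  obtain ⟨a, ha⟩ := (hbot.eventually (eventually_lt_nhds hp0)).exists
  obtain ⟨c, hc⟩ := (htop.eventually (eventually_gt_nhds hp1)).exists
  have hmono : Monotone stdNormalCDF := monotone_cdf _
  have hac : a ≤ c := by
    by_contra h
    have := hmono (le_of_not_ge h)
    linarith
  obtain ⟨y, _, hy⟩ := intermediate_value_Icc hac stdNormalCDF_continuous.continuousOn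
    ⟨ha.le, hc.le⟩
  exact ⟨y, hy⟩

/-- Let `ξ ∼ N(0,Σ)` with `Σ` positive definite, `P = {p : ωᵢᵀp ≤ bᵢ}` with `ωᵢ ≠ 0`,
`0 < η ≤ 1/2` and `Δᵢ = ‖Σ^{1/2}ωᵢ‖₂ Φ⁻¹(1-η)`.  If `x ∉ P_m = {x : ωᵢᵀx ≤ bᵢ - Δᵢ ∀i}`
then `P(x + ξ ∈ P) < 1 - η`. -/
theorem chance_violation_of_not_mem_Pm {n J : ℕ} {Ω : Type*} [MeasurableSpace Ω]
    (P : Measure Ω) [IsProbabilityMeasure P]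
    (S : Matrix (Fin n) (Fin n) ℝ) (hS : S.PosDef)
    (ξ : Ω → Fin n → ℝ)
    (hξ : ∀ v : Fin n → ℝ,
      Measure.map (fun a => ∑ i, v i * ξ a i) P
        = gaussianReal 0 (∑ i, (hS.posSemidef.sqrt.mulVec v i) ^ 2).toNNReal)
    (ω : Fin J → Fin n → ℝ) (hω : ∀ i, ω i ≠ 0) (b : Fin J → ℝ)
    (η : ℝ) (hη₀ : 0 < η) (hη₁ : η ≤ 1 / 2)
    (Δ : Fin J → ℝ)
    (hΔ : ∀ i, Δ i = Real.sqrt (∑ k, (hS.posSemidef.sqrt.mulVec (ω i) k) ^ 2)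
                      * stdNormalQuantile (1 - η))
    (x : Fin n → ℝ)
    (hx : ¬ ∀ i, ∑ k, ω i k * x k ≤ b i - Δ i) :
    (P {a | ∀ i, ∑ k, ω i k * (x k + ξ a k) ≤ b i}).toReal < 1 - η := by
  push_neg at hx
  obtain ⟨i, hi⟩ := hx
  set y := hS.posSemidef.sqrt.mulVec (ω i) with hy
  set V := ∑ k, y k ^ 2 with hVdef
  have hV0 : 0 ≤ V := Finset.sum_nonneg fun k _ => sq_nonneg _
  have hVpos : 0 < V := by
    rcases hV0.lt_or_eq with h | h
    · exact h
    exfalso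
    have hy0 : y = 0 := by
      funext k
      have hk := (Finset.sum_eq_zero_iff_of_nonneg (fun k _ => sq_nonneg (y k))).1 h.symm k
        (Finset.mem_univ k)
      exact pow_eq_zero_iff (two_ne_zero) |>.1 hk
    have hSω : S.mulVec (ω i) = 0 := by
      rw [← hS.posSemidef.sqrt_mul_self, ← Matrix.mulVec_mulVec, ← hy, hy0, Matrix.mulVec_zero]
    have hpos := hS.dotProduct_mulVec_pos (hω i)
    rw [hSω, dotProduct_zero] at hpos
    exact lt_irrefl 0 hpos
  set σ := Real.sqrt V with hσdef
  have hσ : 0 < σ := Real.sqrt_pos.2 hVpos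
  have hq1 : (0:ℝ) < 1 - η := by linarith
  have hq2 : (1:ℝ) - η < 1 := by linarith
  have hΦq : stdNormalCDF (stdNormalQuantile (1 - η)) = 1 - η :=
    stdNormalCDF_quantile _ hq1 hq2
  set c := b i - ∑ k, ω i k * x k with hc
  have hcΔ : c < Δ i := by simp only [hc]; linarith
  have hcq : c / σ < stdNormalQuantile (1 - η) := by
    rw [div_lt_iff₀ hσ]
    calc c < Δ i := hcΔ
    _ = stdNormalQuantile (1 - η) * σ := by rw [hΔ i]; ring
  have hΦ : stdNormalCDF (c / σ) < 1 - η := by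
    rw [← hΦq]; exact stdNormalCDF_strictMono hcq
  have hmap := hξ (ω i)
  have hmeas : AEMeasurable (fun a => ∑ k, ω i k * ξ a k) P :=
    aemeasurable_of_map_neZero (by rw [hmap]; infer_instance)
  have hsub : {a | ∀ j, ∑ k, ω j k * (x k + ξ a k) ≤ b j}
      ⊆ {a | (∑ k, ω i k * ξ a k) ≤ c} := by
    intro a ha
    have hai := ha i
    simp only [mul_add, Finset.sum_add_distrib] at hai
    simp only [Set.mem_setOf_eq, hc]
    linarith
  have hVeq : (⟨σ ^ 2, sq_nonneg _⟩ : NNReal) * 1 = V.toNNReal := by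
    apply NNReal.coe_injective
    simp [hσdef, Real.sq_sqrt hVpos.le, Real.coe_toNNReal _ hVpos.le]
    rfl
  have hgauss : gaussianReal 0 V.toNNReal = (gaussianReal 0 1).map (σ * ·) := by
    rw [gaussianReal_map_const_mul σ, mul_zero]; exact congrArg _ hVeq.symm
  have hpre : (σ * ·) ⁻¹' (Set.Iic c) = Set.Iic (c / σ) := by
    ext t
    simp only [Set.mem_preimage, Set.mem_Iic, le_div_iff₀ hσ, mul_comm]
  have hPle : P {a | (∑ k, ω i k * ξ a k) ≤ c} = ENNReal.ofReal (stdNormalCDF (c / σ)) := by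
    have h1 : P {a | (∑ k, ω i k * ξ a k) ≤ c}
        = Measure.map (fun a => ∑ k, ω i k * ξ a k) P (Set.Iic c) := by
      rw [Measure.map_apply_of_aemeasurable hmeas measurableSet_Iic]
      rfl
    rw [h1, hmap, hgauss, Measure.map_apply (measurable_const_mul σ) measurableSet_Iic, hpre,
      stdNormal_Iic]
  calc (P {a | ∀ j, ∑ k, ω j k * (x k + ξ a k) ≤ b j}).toReal
      ≤ (P {a | (∑ k, ω i k * ξ a k) ≤ c}).toReal :=
        ENNReal.toReal_mono (measure_ne_top _ _) (measure_mono hsub)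
    _ = stdNormalCDF (c / σ) := by rw [hPle]; exact ENNReal.toReal_ofReal (cdf_nonneg _ _)
    _ < 1 - η := hΦ
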